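/- Let f₁,…,fₙ and g₁,…,gₙ be real-analytic functions on ℝ. Then Σᵢ fᵢ(x)·gᵢ⁽ᵏ⁾(x) = 0 for all x ∈ ℝ and all k ≥ 0 if and only if Σᵢ fᵢ(x)·gᵢ(y) = 0 for all x, y ∈ ℝ. -/

import Mathlib

open Finset

private lemma iteratedDeriv_sum_mul {n : ℕ} (k : ℕ) (c : Fin n → ℝ) (g : Fin n → ℝ → ℝ)
    (hg : ∀ i, ContDiff ℝ k (g i)) (x : ℝ) :
    iteratedDeriv k (fun y => ∑ i, c i * g i y) x = ∑ i, c i * iteratedDeriv k (g i) x := by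
  have h1 : (fun y => ∑ i, c i * g i y)
      = (∑ i ∈ Finset.univ, (fun y => c i • g i y) ·) := by
    funext y; simp [smul_eq_mul]
  simp_rw [iteratedDeriv_eq_iteratedFDeriv]
  rw [h1, iteratedFDeriv_sum (fun j _ => ((hg j).const_smul (c j)))]
  simp only [Finset.sum_apply, ContinuousMultilinearMap.sum_apply]
  refine Finset.sum_congr rfl fun i _ => ?_
  rw [iteratedFDeriv_const_smul_apply' (hg i).contDiffAt]
  simp [smul_eq_mul]

/-- For real-analytic functions `fᵢ, gᵢ`, the identities
`Σᵢ fᵢ(x) gᵢ⁽ᵏ⁾(x) = 0` for all `x` and all `k ≥ 0` hold iff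
`Σᵢ fᵢ(x) gᵢ(y) = 0` for all `x, y`. -/
theorem stmt_4 (n : ℕ) (f g : Fin n → ℝ → ℝ)
    (hf : ∀ i, ∀ x : ℝ, AnalyticAt ℝ (f i) x)
    (hg : ∀ i, ∀ x : ℝ, AnalyticAt ℝ (g i) x) :
    (∀ (x : ℝ) (k : ℕ), ∑ i, f i x * iteratedDeriv k (g i) x = 0) ↔
      (∀ x y : ℝ, ∑ i, f i x * g i y = 0) := by
  have hgC : ∀ (k : ℕ) i, ContDiff ℝ k (g i) := by
    intro k i
    rw [contDiff_iff_contDiffAt]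
    exact fun x => (hg i x).contDiffAt.of_le le_top
  constructor
  · intro H x y
    set h : ℝ → ℝ := fun y => ∑ i, f i x * g i y with hh
    have hA : ∀ z : ℝ, AnalyticAt ℝ h z := fun z =>
      Finset.analyticAt_fun_sum _ (fun i _ => (analyticAt_const).mul (hg i z))
    obtain ⟨p, hp⟩ := hA x
    have hder : ∀ k : ℕ, iteratedDeriv k h x = 0 := by
      intro k
      rw [hh, iteratedDeriv_sum_mul k _ _ (hgC k) x]
      exact H x k
    have hp0 : p = 0 := by
      ext k : 1
      obtain ⟨r, hpr⟩ := hp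
      have := hpr.factorial_smul (1 : ℝ) k
      rw [← iteratedDeriv_eq_iteratedFDeriv, hder k, smul_eq_zero] at this
      have hk : (p k) (fun _ => (1 : ℝ)) = 0 := by
        rcases this with h' | h'
        · exact absurd h' (by exact_mod_cast Nat.factorial_ne_zero k)
        · exact h'
      have : p.coeff k = 0 := hk
      rwa [FormalMultilinearSeries.coeff_eq_zero] at this
    rw [hp0] at hp
    have hev : h =ᶠ[nhds x] 0 := hp.eventually_eq_zero
    have : Set.EqOn h 0 Set.univ :=
      AnalyticOnNhd.eqOn_zero_of_preconnected_of_eventuallyEq_zero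
        (fun z _ => hA z) isPreconnected_univ (Set.mem_univ x) hev
    exact this (Set.mem_univ y)
  · intro H x k
    rw [← iteratedDeriv_sum_mul k _ _ (hgC k) x]
    have : (fun y => ∑ i, f i x * g i y) = fun _ => (0 : ℝ) := funext (H x)
    rw [this]
    simp [iteratedDeriv_eq_iteratedFDeriv, iteratedFDeriv_zero_fun]
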